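/- Let q > 1, Δt > 0, a mesh size h > 0, an integer M_x ≥ 1, nonnegative symmetric summable weights (w_j)_{j≠0}, initial data u⁰ supported in {|i| ≤ M_x}, and let (uⁿ)_{n∈ℕ} be the solution of the fully discrete implicit scheme (FD). Then for every n ∈ ℕ the two-sided energy inequality holds: −‖uⁿ‖_X² ≤ (1/q') (‖u^{n+1}‖_{ℓ^q_h}^q − ‖uⁿ‖_{ℓ^q_h}^q)/Δt ≤ −‖u^{n+1}‖_X². -/

import Mathlib

open scoped BigOperators ENNReal

noncomputable def opow (x r : ℝ) : ℝ := |x| ^ (r - 1) * x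

noncomputable def discLap (w u : ℤ → ℝ) (i : ℤ) : ℝ :=
  ∑' j : ℤ, if j = 0 then 0 else w j * (u i - u (i - j))

noncomputable def lqNorm (h q : ℝ) (u : ℤ → ℝ) : ℝ :=
  (∑' i : ℤ, h * |u i| ^ q) ^ (1 / q)

noncomputable def energyNorm (h : ℝ) (w u : ℤ → ℝ) : ℝ :=
  Real.sqrt ((1 / 2) * ∑' i : ℤ, ∑' j : ℤ, if j = 0 then 0 else h * w j * (u i - u (i - j)) ^ 2)

namespace Stmt9Aux

noncomputable def Fb (h : ℝ) (w f g : ℤ → ℝ) (p : ℤ × ℤ) : ℝ :=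
  h * w p.2 * (f p.1 - f (p.1 - p.2)) * (g p.1 - g (p.1 - p.2))

noncomputable def Gb (h : ℝ) (w f g : ℤ → ℝ) (p : ℤ × ℤ) : ℝ :=
  h * f p.1 * (w p.2 * (g p.1 - g (p.1 - p.2)))

lemma abs_of_not_mem {Mx i : ℤ} (hi : i ∉ Finset.Icc (-Mx) Mx) : Mx < |i| := by
  simp only [Finset.mem_Icc, not_and_or, not_le] at hi
  rcases abs_cases i with ⟨e, _⟩ | ⟨e, _⟩ <;> rw [e] <;> omega

lemma sum_diag {w f g : ℤ → ℝ} {Mx : ℤ} (hwsum : Summable w)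
    (hf : ∀ i, Mx < |i| → f i = 0) :
    Summable fun p : ℤ × ℤ => w p.2 * (f p.1 * g p.1) := by
  have h1 : Summable fun i : ℤ => ‖f i * g i‖ := by
    apply summable_of_ne_finset_zero (s := Finset.Icc (-Mx) Mx)
    intro i hi
    simp [hf i (abs_of_not_mem hi)]
  have h2 : Summable fun j : ℤ => ‖w j‖ := by
    simpa [Real.norm_eq_abs] using summable_abs_iff.mpr hwsum
  have h3 : (fun p : ℤ × ℤ => w p.2 * (f p.1 * g p.1))
      = fun p : ℤ × ℤ => (f p.1 * g p.1) * w p.2 := by funext p; ring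
  rw [h3]
  exact summable_mul_of_summable_norm h1 h2

def eShift : ℤ × ℤ ≃ ℤ × ℤ where
  toFun p := (p.1 + p.2, p.2)
  invFun p := (p.1 - p.2, p.2)
  left_inv p := by simp
  right_inv p := by simp

lemma sum_shift {w f g : ℤ → ℝ} {Mx : ℤ} (hwsum : Summable w)
    (hf : ∀ i, Mx < |i| → f i = 0) :
    Summable fun p : ℤ × ℤ => w p.2 * (f (p.1 - p.2) * g (p.1 - p.2)) := by
  rw [← Equiv.summable_iff eShift]
  have h3 : (fun p : ℤ × ℤ => w p.2 * (f (p.1 - p.2) * g (p.1 - p.2))) ∘ eShift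
      = fun p : ℤ × ℤ => w p.2 * (f p.1 * g p.1) := by
    funext p
    simp [eShift, Function.comp]
  rw [h3]
  exact sum_diag hwsum hf

lemma sum_off {w f g : ℤ → ℝ} {Mx : ℤ}
    (hf : ∀ i, Mx < |i| → f i = 0) (hg : ∀ i, Mx < |i| → g i = 0) :
    Summable fun p : ℤ × ℤ => w p.2 * (f p.1 * g (p.1 - p.2)) := by
  apply summable_of_ne_finset_zero
    (s := Finset.Icc (-Mx) Mx ×ˢ Finset.Icc (-(2*Mx)) (2*Mx))
  intro p hp
  rw [Finset.mem_product, not_and_or] at hp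
  by_cases h1 : Mx < |p.1|
  · simp [hf p.1 h1]
  · push_neg at h1
    have hp2 : Mx < |p.1 - p.2| := by
      rcases hp with hp | hp
      · exact absurd (Finset.mem_Icc.mpr (abs_le.mp h1)) hp
      · have h2 : 2*Mx < |p.2| := by
          simp only [Finset.mem_Icc, not_and_or, not_le] at hp
          rcases abs_cases p.2 with ⟨e, _⟩ | ⟨e, _⟩ <;> rw [e] <;> omega
        have h3 : |p.2| - |p.1| ≤ |p.2 - p.1| := abs_sub_abs_le_abs_sub _ _
        rw [abs_sub_comm] at h3
        linarith
    simp [hg _ hp2]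

lemma sumFb {h : ℝ} {w f g : ℤ → ℝ} {Mx : ℤ} (hwsum : Summable w)
    (hf : ∀ i, Mx < |i| → f i = 0) (hg : ∀ i, Mx < |i| → g i = 0) :
    Summable (Fb h w f g) := by
  have h1 := sum_diag (g := g) hwsum hf
  have h2 := sum_shift (g := g) hwsum hf
  have h3 := sum_off (w := w) hf hg
  have h4 := sum_off (w := w) hg hf
  have key : Fb h w f g = fun p : ℤ × ℤ =>
      h * ((w p.2 * (f p.1 * g p.1) - w p.2 * (f p.1 * g (p.1 - p.2)))
        - (w p.2 * (g p.1 * f (p.1 - p.2)) - w p.2 * (f (p.1 - p.2) * g (p.1 - p.2)))) := by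
    funext p; unfold Fb; ring
  rw [key]
  exact ((h1.sub h3).sub (h4.sub h2)).mul_left h

lemma sumGb {h : ℝ} {w f g : ℤ → ℝ} {Mx : ℤ} (hwsum : Summable w)
    (hf : ∀ i, Mx < |i| → f i = 0) (hg : ∀ i, Mx < |i| → g i = 0) :
    Summable (Gb h w f g) := by
  have h1 := sum_diag (g := g) hwsum hf
  have h3 := sum_off (w := w) hf hg
  have key : Gb h w f g = fun p : ℤ × ℤ =>
      h * (w p.2 * (f p.1 * g p.1) - w p.2 * (f p.1 * g (p.1 - p.2))) := by
    funext p; unfold Gb; ring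
  rw [key]
  exact (h1.sub h3).mul_left h

def eFlip : ℤ × ℤ ≃ ℤ × ℤ where
  toFun p := (p.1 - p.2, -p.2)
  invFun p := (p.1 - p.2, -p.2)
  left_inv p := by simp [sub_neg_eq_add]
  right_inv p := by simp [sub_neg_eq_add]

lemma ibp {h : ℝ} {w f g : ℤ → ℝ} {Mx : ℤ} (hwsum : Summable w)
    (hwsym : ∀ j, w (-j) = w j)
    (hf : ∀ i, Mx < |i| → f i = 0) (hg : ∀ i, Mx < |i| → g i = 0) :
    ∑' p : ℤ × ℤ, Fb h w f g p = 2 * ∑' p : ℤ × ℤ, Gb h w f g p := by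
  have hG := sumGb (h := h) hwsum hf hg
  have hGe : Summable fun p : ℤ × ℤ => Gb h w f g (eFlip p) := eFlip.summable_iff.mpr hG
  have hpt : ∀ p : ℤ × ℤ, Fb h w f g p = Gb h w f g p + Gb h w f g (eFlip p) := by
    intro p
    show Fb h w f g p = Gb h w f g p + Gb h w f g (p.1 - p.2, -p.2)
    unfold Fb Gb
    simp only
    rw [hwsym p.2, show p.1 - p.2 - -p.2 = p.1 from by ring]
    ring
  calc ∑' p : ℤ × ℤ, Fb h w f g p
      = ∑' p : ℤ × ℤ, (Gb h w f g p + Gb h w f g (eFlip p)) := tsum_congr hpt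
    _ = (∑' p : ℤ × ℤ, Gb h w f g p) + ∑' p : ℤ × ℤ, Gb h w f g (eFlip p) :=
        hG.tsum_add hGe
    _ = 2 * ∑' p : ℤ × ℤ, Gb h w f g p := by
        rw [eFlip.tsum_eq (Gb h w f g)]; ring

lemma pairing {h : ℝ} {w f g : ℤ → ℝ} {Mx : ℤ} (hwsum : Summable w)
    (hf : ∀ i, Mx < |i| → f i = 0) (hg : ∀ i, Mx < |i| → g i = 0) :
    ∑' i : ℤ, h * f i * discLap w g i = ∑' p : ℤ × ℤ, Gb h w f g p := by
  rw [Summable.tsum_prod (sumGb (h := h) hwsum hf hg)]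
  apply tsum_congr
  intro i
  have h1 : discLap w g i = ∑' j : ℤ, w j * (g i - g (i - j)) := by
    unfold discLap
    apply tsum_congr
    intro j
    split_ifs with hj
    · simp [hj]
    · rfl
  rw [h1, ← tsum_mul_left]
  apply tsum_congr
  intro j
  show h * f i * (w j * (g i - g (i - j))) = Gb h w f g (i, j)
  unfold Gb
  rfl

end Stmt9Aux
namespace Stmt9Aux

lemma energy_sq {h : ℝ} {w f : ℤ → ℝ} {Mx : ℤ} (hh : 0 ≤ h) (hw0 : ∀ j, 0 ≤ w j)
    (hwsum : Summable w) (hf : ∀ i, Mx < |i| → f i = 0) :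
    energyNorm h w f ^ 2 = 1/2 * ∑' p : ℤ × ℤ, Fb h w f f p := by
  unfold energyNorm
  have h0 : 0 ≤ (1/2 : ℝ) * ∑' i : ℤ, ∑' j : ℤ,
      if j = 0 then 0 else h * w j * (f i - f (i - j)) ^ 2 := by
    apply mul_nonneg (by norm_num)
    refine tsum_nonneg fun i => tsum_nonneg fun j => ?_
    split_ifs with hj
    · exact le_refl 0
    · exact mul_nonneg (mul_nonneg hh (hw0 j)) (sq_nonneg _)
  rw [Real.sq_sqrt h0, Summable.tsum_prod (sumFb (h := h) hwsum hf hf)]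
  congr 1
  refine tsum_congr fun i => tsum_congr fun j => ?_
  unfold Fb
  split_ifs with hj
  · simp [hj]
  · ring

lemma lq_pow {h q : ℝ} {f : ℤ → ℝ} {Mx : ℤ} (hq : 1 < q) (hh : 0 ≤ h)
    (hf : ∀ i, Mx < |i| → f i = 0) :
    lqNorm h q f ^ q = ∑ i ∈ Finset.Icc (-Mx) Mx, h * |f i| ^ q := by
  have hq0 : q ≠ 0 := by linarith
  unfold lqNorm
  rw [tsum_eq_sum (s := Finset.Icc (-Mx) Mx) (fun i hi => by
    rw [hf i (abs_of_not_mem hi)]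
    simp [Real.zero_rpow hq0])]
  have hT : 0 ≤ ∑ i ∈ Finset.Icc (-Mx) Mx, h * |f i| ^ q :=
    Finset.sum_nonneg fun i _ => mul_nonneg hh (Real.rpow_nonneg (abs_nonneg _) q)
  rw [← Real.rpow_mul hT, one_div, inv_mul_cancel₀ hq0, Real.rpow_one]

lemma opow_mul_self {q : ℝ} (hq : 1 < q) (x : ℝ) : x * opow x (q - 1) = |x| ^ q := by
  unfold opow
  rcases eq_or_ne x 0 with rfl | hx
  · simp [Real.zero_rpow (show q ≠ 0 by linarith)]
  · have h1 : (0:ℝ) < |x| := abs_pos.mpr hx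
    have h3 : x * x = |x| ^ (2:ℝ) := by
      rw [show ((2:ℝ)) = ((2:ℕ):ℝ) by norm_num, Real.rpow_natCast, sq_abs]
      ring
    rw [show q - 1 - 1 = q - 2 from by ring]
    calc x * (|x| ^ (q - 2) * x) = |x| ^ (q - 2) * (x * x) := by ring
      _ = |x| ^ (q - 2) * |x| ^ (2:ℝ) := by rw [h3]
      _ = |x| ^ (q - 2 + 2) := (Real.rpow_add h1 _ _).symm
      _ = |x| ^ q := by rw [show q - 2 + 2 = q from by ring]

lemma young_opow {q : ℝ} (hq : 1 < q) (x y : ℝ) :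
    x * opow y (q - 1) ≤ |x| ^ q / q + |y| ^ q * ((q - 1) / q) := by
  have hq0 : (0:ℝ) < q := by linarith
  have hq1 : (0:ℝ) < q - 1 := by linarith
  have habs : |opow y (q - 1)| = |y| ^ (q - 1) := by
    unfold opow
    rcases eq_or_ne y 0 with rfl | hy
    · simp [Real.zero_rpow (ne_of_gt hq1)]
    · have h1 : (0:ℝ) < |y| := abs_pos.mpr hy
      rw [abs_mul, abs_of_nonneg (Real.rpow_nonneg (abs_nonneg y) _),
        show q - 1 - 1 = q - 2 from by ring]
      calc |y| ^ (q - 2) * |y| = |y| ^ (q - 2) * |y| ^ (1:ℝ) := by rw [Real.rpow_one]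
        _ = |y| ^ (q - 2 + 1) := (Real.rpow_add h1 _ _).symm
        _ = |y| ^ (q - 1) := by rw [show q - 2 + 1 = q - 1 from by ring]
  have hconj : Real.HolderConjugate q (q / (q - 1)) := by
    rw [Real.holderConjugate_iff]
    constructor
    · exact hq
    · field_simp
      ring
  calc x * opow y (q - 1) ≤ |x * opow y (q - 1)| := le_abs_self _
    _ = |x| * |y| ^ (q - 1) := by rw [abs_mul, habs]
    _ ≤ |x| ^ q / q + (|y| ^ (q - 1)) ^ (q / (q - 1)) / (q / (q - 1)) :=
        Real.young_inequality_of_nonneg (abs_nonneg x)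
          (Real.rpow_nonneg (abs_nonneg y) _) hconj
    _ = |x| ^ q / q + |y| ^ q * ((q - 1) / q) := by
        rw [← Real.rpow_mul (abs_nonneg y),
          show (q - 1) * (q / (q - 1)) = q from by field_simp,
          div_div_eq_mul_div, mul_div_assoc]

lemma opow_ineq1 {q : ℝ} (hq : 1 < q) (x y : ℝ) :
    (q - 1) / q * (|y| ^ q - |x| ^ q) ≤ y * (opow y (q - 1) - opow x (q - 1)) := by
  have h1 := young_opow hq y x
  have h2 := opow_mul_self hq y
  have hq0 : q ≠ 0 := by linarith
  have key : (q - 1) / q * (|y| ^ q - |x| ^ q)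
      = |y| ^ q - (|y| ^ q / q + |x| ^ q * ((q - 1) / q)) := by
    field_simp
    ring
  have expand : y * (opow y (q - 1) - opow x (q - 1))
      = |y| ^ q - y * opow x (q - 1) := by rw [← h2]; ring
  rw [expand, key]
  linarith

lemma opow_ineq2 {q : ℝ} (hq : 1 < q) (x y : ℝ) :
    x * (opow y (q - 1) - opow x (q - 1)) ≤ (q - 1) / q * (|y| ^ q - |x| ^ q) := by
  have h1 := young_opow hq x y
  have h2 := opow_mul_self hq x
  have hq0 : q ≠ 0 := by linarith
  have key : (q - 1) / q * (|y| ^ q - |x| ^ q)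
      = |x| ^ q / q + |y| ^ q * ((q - 1) / q) - |x| ^ q := by
    field_simp
    ring
  have expand : x * (opow y (q - 1) - opow x (q - 1))
      = x * opow y (q - 1) - |x| ^ q := by rw [← h2]; ring
  rw [expand, key]
  linarith

end Stmt9Aux

/-- The fully discrete implicit scheme (FD). -/
def IsFD (q Δt : ℝ) (w : ℤ → ℝ) (Mx : ℤ) (u0 : ℤ → ℝ) (u : ℕ → ℤ → ℝ) : Prop :=
  u 0 = u0 ∧
  (∀ n : ℕ, ∀ i : ℤ, Mx < |i| → u n i = 0) ∧
  (∀ n : ℕ, ∀ i : ℤ, |i| ≤ Mx →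
    (opow (u (n + 1) i) (q - 1) - opow (u n i) (q - 1)) / Δt + discLap w (u (n + 1)) i = 0)

/-- A solution of the semi-discrete scheme (SD) with initial data `u0`. -/
def IsSD (q : ℝ) (w : ℤ → ℝ) (Mx : ℤ) (u0 : ℤ → ℝ) (v : ℤ → ℝ → ℝ) : Prop :=
  (∀ i : ℤ, ContinuousOn (v i) (Set.Ici 0)) ∧
  (∀ i : ℤ, Mx < |i| → ∀ t : ℝ, 0 ≤ t → v i t = 0) ∧
  (∀ i : ℤ, v i 0 = u0 i) ∧
  (∀ i : ℤ, |i| ≤ Mx → ∀ t : ℝ, 0 ≤ t →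
    opow (v i t) (q - 1) = opow (u0 i) (q - 1) - ∫ s in (0:ℝ)..t, discLap w (fun k => v k s) i)

/-- `C` satisfies the discrete Poincaré–Sobolev inequality for exponent `q`. -/
def PSConst (h q C : ℝ) (w : ℤ → ℝ) (Mx : ℤ) : Prop :=
  ∀ f : ℤ → ℝ, (∀ i : ℤ, Mx < |i| → f i = 0) → lqNorm h q f ≤ C * energyNorm h w f

open Stmt9Aux

theorem stmt9 (q Δt h : ℝ) (hq : 1 < q) (hΔt : 0 < Δt) (hh : 0 < h)
    (Mx : ℤ) (hMx : 1 ≤ Mx)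
    (w : ℤ → ℝ) (hw0 : ∀ j : ℤ, 0 ≤ w j) (hwsym : ∀ j : ℤ, w (-j) = w j) (hwsum : Summable w)
    (u0 : ℤ → ℝ) (hu0 : ∀ i : ℤ, Mx < |i| → u0 i = 0)
    (u : ℕ → ℤ → ℝ) (hu : IsFD q Δt w Mx u0 u) :
    ∀ n : ℕ,
      -(energyNorm h w (u n)) ^ 2 ≤
          (1 / (q / (q - 1))) * (lqNorm h q (u (n + 1)) ^ q - lqNorm h q (u n) ^ q) / Δt ∧
        (1 / (q / (q - 1))) * (lqNorm h q (u (n + 1)) ^ q - lqNorm h q (u n) ^ q) / Δt ≤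
          -(energyNorm h w (u (n + 1))) ^ 2 := by
  obtain ⟨-, hsupp, hsch⟩ := hu
  intro n
  set a := u n with ha'
  set b := u (n + 1) with hb'
  have ha : ∀ i, Mx < |i| → a i = 0 := hsupp n
  have hb : ∀ i, Mx < |i| → b i = 0 := hsupp (n + 1)
  set s := Finset.Icc (-Mx) Mx with hs'
  have hΔt' : Δt ≠ 0 := ne_of_gt hΔt
  -- summabilities
  have sFaa := sumFb (h := h) hwsum ha ha
  have sFab := sumFb (h := h) hwsum ha hb
  have sFba := sumFb (h := h) hwsum hb ha
  have sFbb := sumFb (h := h) hwsum hb hb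
  -- scheme step
  have step : ∀ c : ℤ → ℝ, (∀ i, Mx < |i| → c i = 0) →
      ∑ i ∈ s, h * c i * (opow (b i) (q - 1) - opow (a i) (q - 1))
        = -Δt * (1/2 * ∑' p : ℤ × ℤ, Fb h w c b p) := by
    intro c hc
    have e1 : ∀ i : ℤ, h * c i * (opow (b i) (q - 1) - opow (a i) (q - 1))
        = -Δt * (h * c i * discLap w b i) := by
      intro i
      by_cases hi : |i| ≤ Mx
      · have h1 := hsch n i hi
        have h2 : opow (b i) (q - 1) - opow (a i) (q - 1) = -Δt * discLap w b i := by
          field_simp at h1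
          linarith
        rw [h2]; ring
      · push_neg at hi
        rw [hc i hi]; ring
    calc ∑ i ∈ s, h * c i * (opow (b i) (q - 1) - opow (a i) (q - 1))
        = ∑' i : ℤ, h * c i * (opow (b i) (q - 1) - opow (a i) (q - 1)) := by
          rw [tsum_eq_sum (s := s) (fun i hi => by
            rw [hc i (abs_of_not_mem hi)]; ring)]
      _ = ∑' i : ℤ, -Δt * (h * c i * discLap w b i) := tsum_congr e1
      _ = -Δt * ∑' i : ℤ, h * c i * discLap w b i := tsum_mul_left
      _ = -Δt * ∑' p : ℤ × ℤ, Gb h w c b p := by rw [pairing hwsum hc hb]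
      _ = -Δt * (1/2 * ∑' p : ℤ × ℤ, Fb h w c b p) := by
          rw [ibp hwsum hwsym hc hb]; ring
  have stepb := step b hb
  have stepa := step a ha
  -- Young comparisons
  have youngb : (q - 1) / q * ((∑ i ∈ s, h * |b i| ^ q) - ∑ i ∈ s, h * |a i| ^ q)
      ≤ ∑ i ∈ s, h * b i * (opow (b i) (q - 1) - opow (a i) (q - 1)) := by
    have e1 : (q - 1) / q * ((∑ i ∈ s, h * |b i| ^ q) - ∑ i ∈ s, h * |a i| ^ q)
        = ∑ i ∈ s, h * ((q - 1) / q * (|b i| ^ q - |a i| ^ q)) := by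
      rw [← Finset.sum_sub_distrib, Finset.mul_sum]
      exact Finset.sum_congr rfl fun i _ => by ring
    rw [e1]
    refine Finset.sum_le_sum fun i _ => ?_
    have := mul_le_mul_of_nonneg_left (opow_ineq1 hq (a i) (b i)) hh.le
    calc h * ((q - 1) / q * (|b i| ^ q - |a i| ^ q))
        ≤ h * (b i * (opow (b i) (q - 1) - opow (a i) (q - 1))) := this
      _ = h * b i * (opow (b i) (q - 1) - opow (a i) (q - 1)) := by ring
  have younga : ∑ i ∈ s, h * a i * (opow (b i) (q - 1) - opow (a i) (q - 1))
      ≤ (q - 1) / q * ((∑ i ∈ s, h * |b i| ^ q) - ∑ i ∈ s, h * |a i| ^ q) := by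
    have e1 : (q - 1) / q * ((∑ i ∈ s, h * |b i| ^ q) - ∑ i ∈ s, h * |a i| ^ q)
        = ∑ i ∈ s, h * ((q - 1) / q * (|b i| ^ q - |a i| ^ q)) := by
      rw [← Finset.sum_sub_distrib, Finset.mul_sum]
      exact Finset.sum_congr rfl fun i _ => by ring
    rw [e1]
    refine Finset.sum_le_sum fun i _ => ?_
    have := mul_le_mul_of_nonneg_left (opow_ineq2 hq (a i) (b i)) hh.le
    calc h * a i * (opow (b i) (q - 1) - opow (a i) (q - 1))
        = h * (a i * (opow (b i) (q - 1) - opow (a i) (q - 1))) := by ring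
      _ ≤ h * ((q - 1) / q * (|b i| ^ q - |a i| ^ q)) := this
  -- cross-term symmetry and positivity
  have hba : ∑' p : ℤ × ℤ, Fb h w b a p = ∑' p : ℤ × ℤ, Fb h w a b p :=
    tsum_congr fun p => by unfold Fb; ring
  have hAnn : 0 ≤ ∑' p : ℤ × ℤ, Fb h w a a p :=
    tsum_nonneg fun p => by
      rw [show Fb h w a a p = h * w p.2 * (a p.1 - a (p.1 - p.2)) ^ 2 from by unfold Fb; ring]
      exact mul_nonneg (mul_nonneg hh.le (hw0 _)) (sq_nonneg _)
  have hBnn : 0 ≤ ∑' p : ℤ × ℤ, Fb h w b b p :=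
    tsum_nonneg fun p => by
      rw [show Fb h w b b p = h * w p.2 * (b p.1 - b (p.1 - p.2)) ^ 2 from by unfold Fb; ring]
      exact mul_nonneg (mul_nonneg hh.le (hw0 _)) (sq_nonneg _)
  have hd : ∀ i, Mx < |i| → a i - b i = 0 := fun i hi => by
    rw [ha i hi, hb i hi, sub_zero]
  have hdd : (0:ℝ) ≤ ∑' p : ℤ × ℤ, Fb h w (fun i => a i - b i) (fun i => a i - b i) p :=
    tsum_nonneg fun p => by
      rw [show Fb h w (fun i => a i - b i) (fun i => a i - b i) p
          = h * w p.2 * ((a p.1 - b p.1) - (a (p.1 - p.2) - b (p.1 - p.2))) ^ 2 from by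
        unfold Fb; ring]
      exact mul_nonneg (mul_nonneg hh.le (hw0 _)) (sq_nonneg _)
  have hsplit : ∑' p : ℤ × ℤ, Fb h w (fun i => a i - b i) (fun i => a i - b i) p
      = (∑' p : ℤ × ℤ, Fb h w a a p - ∑' p : ℤ × ℤ, Fb h w a b p)
        - (∑' p : ℤ × ℤ, Fb h w b a p - ∑' p : ℤ × ℤ, Fb h w b b p) := by
    have hfun : Fb h w (fun i => a i - b i) (fun i => a i - b i)
        = fun p : ℤ × ℤ => (Fb h w a a p - Fb h w a b p) - (Fb h w b a p - Fb h w b b p) := by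
      funext p; unfold Fb; ring
    rw [hfun, Summable.tsum_sub (sFaa.sub sFab) (sFba.sub sFbb), Summable.tsum_sub sFaa sFab, Summable.tsum_sub sFba sFbb]
  -- norm identities
  have hEa := energy_sq (h := h) hh.le hw0 hwsum ha
  have hEb := energy_sq (h := h) hh.le hw0 hwsum hb
  have hLa := lq_pow (h := h) hq hh.le ha
  have hLb := lq_pow (h := h) hq hh.le hb
  have hκ : (1:ℝ) / (q / (q - 1)) = (q - 1) / q := one_div_div q (q - 1)
  set A := ∑' p : ℤ × ℤ, Fb h w a a p with hA'
  set B := ∑' p : ℤ × ℤ, Fb h w b b p with hB'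
  set C := ∑' p : ℤ × ℤ, Fb h w a b p with hC'
  set Ta := ∑ i ∈ s, h * |a i| ^ q with hTa'
  set Tb := ∑ i ∈ s, h * |b i| ^ q with hTb'
  -- combined inequalities
  have hE1 : (q - 1) / q * (Tb - Ta) ≤ -Δt * (1/2 * B) := le_trans youngb (le_of_eq stepb)
  have hE2 : -Δt * (1/2 * C) ≤ (q - 1) / q * (Tb - Ta) := le_trans (le_of_eq stepa.symm) younga
  have hBC : B ≤ C := by
    have h' : Δt * B ≤ Δt * C := by linarith [hE1, hE2]
    exact (mul_le_mul_iff_right₀ hΔt).mp h'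
  have hCA : C ≤ A := by
    rw [hba] at hsplit
    linarith [hdd, hsplit, hBC]
  constructor
  · rw [hκ, hLb, hLa, hEa, le_div_iff₀ hΔt]
    linarith [hE2, mul_nonneg hΔt.le (sub_nonneg.mpr hCA)]
  · rw [hκ, hLb, hLa, hEb, div_le_iff₀ hΔt]
    linarith [hE1]
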